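/- Let X₁, …, Xₙ be i.i.d. real random variables with mean μ and second moment v² = E X₁² < ∞. For any y > 0, the truncated-mean estimator μ̂ = (1/n)∑ᵢ ψ_τ(Xᵢ) with τ = 2v²/y satisfies P(μ̂ − μ ≥ y) ≤ exp(−n y²/(4v²)). -/

import Mathlib

open MeasureTheory ProbabilityTheory Real

/-- Truncation operator ψ_τ(u) = sign(u)·min(|u|, τ). -/
noncomputable def psi (τ u : ℝ) : ℝ := Real.sign u * min |u| τ

lemma psi_eq {τ : ℝ} (hτ : 0 < τ) (u : ℝ) : psi τ u = max (min u τ) (-τ) := by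
  rcases lt_trichotomy u 0 with h | h | h
  · rw [psi, Real.sign_of_neg h, abs_of_neg h]
    rcases le_total (-u) τ with h2 | h2
    · rw [min_eq_left h2, min_eq_left (by linarith), max_eq_left (by linarith)]; ring
    · rw [min_eq_right h2, min_eq_left (by linarith), max_eq_right (by linarith)]; ring
  · simp [psi, h, hτ.le]
  · rw [psi, Real.sign_of_pos h, abs_of_pos h, one_mul,
      max_eq_left (le_trans (by linarith : -τ ≤ (0:ℝ)) (le_min h.le hτ.le))]

lemma exp_le_quad {x : ℝ} (hx : |x| ≤ 1) : Real.exp x ≤ 1 + x + x ^ 2 := by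
  have h := Real.exp_bound hx (n := 3) (by norm_num)
  have hs : ∑ m ∈ Finset.range 3, x ^ m / m.factorial = 1 + x + x ^ 2 / 2 := by
    norm_num [Finset.sum_range_succ, Nat.factorial]
  rw [hs] at h
  have h1 := (abs_sub_le_iff.1 h).1
  have h2 : |x| ^ 3 ≤ x ^ 2 := by
    calc |x| ^ 3 = |x| ^ 2 * |x| := by ring
    _ ≤ |x| ^ 2 * 1 := by gcongr
    _ = x ^ 2 := by rw [sq_abs, mul_one]
  have : (3:ℕ).succ / ((3:ℕ).factorial * (3:ℕ) : ℝ) = 2/9 := by norm_num [Nat.factorial]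
  rw [this] at h1
  nlinarith [sq_nonneg x]

lemma exp_psi_le {τ : ℝ} (hτ : 0 < τ) (u : ℝ) :
    Real.exp (psi τ u / τ) ≤ 1 + u / τ + (u / τ) ^ 2 := by
  rw [psi_eq hτ]
  rcases le_total u (-τ) with h | h
  · rw [min_eq_left (by linarith), max_eq_right (by linarith)]
    have : Real.exp (-τ / τ) = Real.exp (-1) := by rw [neg_div, div_self hτ.ne']
    rw [this]
    have hx : u / τ ≤ -1 := by rw [div_le_iff₀ hτ]; linarith
    nlinarith [Real.exp_neg_one_lt_d9, sq_nonneg (u/τ + 1)]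
  · rcases le_total τ u with h2 | h2
    · rw [min_eq_right h2, max_eq_left (by linarith), div_self hτ.ne']
      have hx : 1 ≤ u / τ := by rw [le_div_iff₀ hτ]; linarith
      nlinarith [Real.exp_one_lt_d9, sq_nonneg (u/τ - 1)]
    · rw [min_eq_left h2, max_eq_left (by linarith)]
      exact exp_le_quad (abs_le.2 ⟨by rw [le_div_iff₀ hτ]; linarith, by rw [div_le_one hτ]; linarith⟩)

set_option maxHeartbeats 1000000 in
theorem stmt4 {Ω : Type*} [MeasurableSpace Ω] (μ : Measure Ω) [IsProbabilityMeasure μ]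
    (n : ℕ) (hn : 0 < n) (X : Fin n → Ω → ℝ) (hmeas : ∀ i, Measurable (X i))
    (hindep : iIndepFun X μ)
    (hident : ∀ i, IdentDistrib (X i) (X ⟨0, hn⟩) μ μ)
    (m v : ℝ) (hv : 0 < v)
    (hmean : ∀ i, ∫ ω, X i ω ∂μ = m) (hsec : ∀ i, ∫ ω, (X i ω) ^ 2 ∂μ = v ^ 2)
    (y : ℝ) (hy : 0 < y) :
    (μ {ω | y ≤ (n : ℝ)⁻¹ * ∑ i, psi (2 * v ^ 2 / y) (X i ω) - m}).toReal
      ≤ Real.exp (-(n * y ^ 2) / (4 * v ^ 2)) := by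
  set τ : ℝ := 2 * v ^ 2 / y with hτdef
  have hτ : 0 < τ := by positivity
  set t : ℝ := y / (2 * v ^ 2) with htdef
  have ht : 0 < t := by positivity
  have htτ : t = τ⁻¹ := by rw [hτdef, htdef]; field_simp
  have hn' : (0:ℝ) < n := Nat.cast_pos.mpr hn
  set Y : Fin n → Ω → ℝ := fun i ω => psi τ (X i ω) with hYdef
  have hYfun : ∀ i, Y i = (fun u => max (min u τ) (-τ)) ∘ X i := by
    intro i; funext ω; simp [hYdef, psi_eq hτ]
  have hgm : Measurable (fun u : ℝ => max (min u τ) (-τ)) :=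
    (measurable_id.min measurable_const).max measurable_const
  have hYmeas : ∀ i, Measurable (Y i) := fun i => (hYfun i) ▸ hgm.comp (hmeas i)
  have hYindep : iIndepFun Y μ := by
    have h := hindep.comp (fun _ u => max (min u τ) (-τ)) (fun _ => hgm)
    convert h using 2 with i
    exact hYfun i
  have hYle : ∀ i ω, Y i ω ≤ τ := by
    intro i ω; rw [hYdef]; simp only; rw [psi_eq hτ]
    exact max_le (min_le_right _ _) (by linarith)
  -- integrability of X i ^ 2 and X i
  have hsq_int : ∀ i, Integrable (fun ω => X i ω ^ 2) μ := by
    intro i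
    by_contra h
    have h2 := hsec i
    rw [integral_undef h] at h2
    exact absurd h2.symm (by positivity : (0:ℝ) < v ^ 2).ne'
  have hX_int : ∀ i, Integrable (X i) μ := by
    intro i
    refine Integrable.mono' ((integrable_const 1).add (hsq_int i))
      (hmeas i).aestronglyMeasurable (Filter.Eventually.of_forall fun ω => ?_)
    have := sq_nonneg (|X i ω| - 1)
    simp only [Real.norm_eq_abs, Pi.add_apply]
    nlinarith [sq_abs (X i ω)]
  -- integrability of exp (t * Y i)
  have hexp_int : ∀ i, Integrable (fun ω => Real.exp (t * Y i ω)) μ := by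
    intro i
    refine Integrable.mono' (integrable_const (Real.exp 1))
      (((hYmeas i).const_mul t).exp).aestronglyMeasurable
      (Filter.Eventually.of_forall fun ω => ?_)
    rw [Real.norm_eq_abs, abs_of_pos (Real.exp_pos _)]
    apply Real.exp_le_exp.2
    calc t * Y i ω ≤ t * τ := mul_le_mul_of_nonneg_left (hYle i ω) ht.le
    _ = 1 := by rw [htτ, inv_mul_cancel₀ hτ.ne']
  -- mgf bound for each i
  have hmgf : ∀ i, mgf (Y i) μ t ≤ Real.exp (t * m + t ^ 2 * v ^ 2) := by
    intro i
    have hpt : ∀ ω, Real.exp (t * Y i ω) ≤ 1 + t * X i ω + t ^ 2 * X i ω ^ 2 := by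
      intro ω
      have h1 : t * Y i ω = psi τ (X i ω) / τ := by rw [htτ, hYdef]; ring
      have h2 := exp_psi_le hτ (X i ω)
      rw [h1]
      refine h2.trans (le_of_eq ?_)
      rw [htτ]; field_simp
    have hrhs : Integrable (fun ω => 1 + t * X i ω + t ^ 2 * X i ω ^ 2) μ :=
      ((integrable_const 1).add ((hX_int i).const_mul t)).add ((hsq_int i).const_mul (t ^ 2))
    calc mgf (Y i) μ t = ∫ ω, Real.exp (t * Y i ω) ∂μ := rfl
      _ ≤ ∫ ω, (1 + t * X i ω + t ^ 2 * X i ω ^ 2) ∂μ :=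
          integral_mono (hexp_int i) hrhs hpt
      _ = 1 + t * m + t ^ 2 * v ^ 2 := by
          have i1 : Integrable (fun ω => 1 + t * X i ω) μ :=
            (integrable_const 1).add ((hX_int i).const_mul t)
          have i2 : Integrable (fun ω => t ^ 2 * X i ω ^ 2) μ := (hsq_int i).const_mul (t ^ 2)
          rw [integral_add i1 i2, integral_add (integrable_const 1) ((hX_int i).const_mul t),
            integral_const, integral_const_mul, integral_const_mul, hmean i, hsec i]
          simp
      _ ≤ Real.exp (t * m + t ^ 2 * v ^ 2) := by
          have := Real.add_one_le_exp (t * m + t ^ 2 * v ^ 2)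
          linarith
  -- the sum as a function
  set S : Ω → ℝ := fun ω => ∑ i, Y i ω with hSdef
  have hSsum : (∑ i, Y i) = S := by funext ω; rw [Finset.sum_apply]
  have hSmeas : Measurable S := Finset.measurable_sum Finset.univ fun i _ => hYmeas i
  -- event rewriting
  have hset : {ω | y ≤ (n : ℝ)⁻¹ * ∑ i, psi τ (X i ω) - m}
      = {ω | (n : ℝ) * (y + m) ≤ S ω} := by
    ext ω
    simp only [Set.mem_setOf_eq]
    have hEq : S ω = ∑ i : Fin n, psi τ (X i ω) := rfl
    rw [hEq, le_sub_iff_add_le, inv_mul_eq_div, le_div_iff₀ hn']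
    constructor <;> intro h <;> linarith
  -- integrability of exp (t * sum)
  have hsum_int : Integrable (fun ω => Real.exp (t * S ω)) μ := by
    refine Integrable.mono' (integrable_const (Real.exp n))
      (hSmeas.const_mul t).exp.aestronglyMeasurable
      (Filter.Eventually.of_forall fun ω => ?_)
    rw [Real.norm_eq_abs, abs_of_pos (Real.exp_pos _)]
    apply Real.exp_le_exp.2
    calc t * S ω = ∑ i, t * Y i ω := by rw [hSdef]; exact Finset.mul_sum _ _ _
      _ ≤ ∑ _i : Fin n, (1:ℝ) := by
          apply Finset.sum_le_sum
          intro i _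
          calc t * Y i ω ≤ t * τ := mul_le_mul_of_nonneg_left (hYle i ω) ht.le
          _ = 1 := by rw [htτ, inv_mul_cancel₀ hτ.ne']
      _ = n := by simp
  have chernoff := measure_ge_le_exp_mul_mgf (μ := μ) (X := S)
    ((n:ℝ) * (y + m)) ht.le hsum_int
  have hmgfS : mgf S μ t = ∏ i, mgf (Y i) μ t := by
    rw [← hSsum]; exact hYindep.mgf_sum hYmeas Finset.univ
  rw [hset]
  refine chernoff.trans ?_
  rw [hmgfS]
  calc Real.exp (-t * ((n:ℝ) * (y + m))) * ∏ i, mgf (Y i) μ t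
      ≤ Real.exp (-t * ((n:ℝ) * (y + m))) * ∏ _i : Fin n, Real.exp (t * m + t ^ 2 * v ^ 2) := by
        apply mul_le_mul_of_nonneg_left _ (Real.exp_pos _).le
        exact Finset.prod_le_prod (fun i _ => mgf_nonneg) (fun i _ => hmgf i)
    _ = Real.exp (-t * ((n:ℝ) * (y + m)) + (n:ℝ) * (t * m + t ^ 2 * v ^ 2)) := by
        rw [Finset.prod_const, Finset.card_univ, Fintype.card_fin, ← Real.exp_nat_mul,
          ← Real.exp_add]
    _ = Real.exp (-((n:ℝ) * y ^ 2) / (4 * v ^ 2)) := by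
        congr 1
        rw [htdef]
        field_simp
        ring
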